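/- In the setting of automatic reducibility for a conformally symplectic map with factor λ: if f ∘ K = K ∘ T_ω exactly, DK has full rank, DK^T (J^c ∘ K) DK = 0, and Df ∘ K satisfies the conformal identity Df^T (J^c∘f) Df = λ (J^c), then the second diagonal block in the reduced cocycle equals λ Id_d; that is, writing Df∘K(θ) M(θ) = M(θ+ω) B(θ) with M(θ) = [DK(θ) | (J^c)⁻¹∘K(θ) DK(θ)N(θ)], the matrix B(θ) is upper triangular of the form [[Id_d, S(θ)], [0, λ Id_d]]. -/

import Mathlib

open Matrix

private lemma aux_cancel {m a : Type*} [Fintype m] [DecidableEq m] {X Y : Matrix m m ℝ}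
    (h : X * Y = 1) (Z : Matrix m a ℝ) : X * (Y * Z) = Z := by
  rw [← Matrix.mul_assoc, h, Matrix.one_mul]

private lemma aux_unit {d n : ℕ} (A : Matrix (Fin n) (Fin d) ℝ) (h : A.rank = d) :
    IsUnit (Aᵀ * A) := by
  rw [← Matrix.mulVec_surjective_iff_isUnit]
  have hr : (Aᵀ * A).rank = d := by rw [Matrix.rank_transpose_mul_self, h]
  have htop : LinearMap.range (Aᵀ * A).mulVecLin = ⊤ := by
    apply Submodule.eq_top_of_finrank_eq
    simpa [Matrix.rank] using hr
  intro y
  exact LinearMap.range_eq_top.mp htop y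

private lemma aux_key {d n : ℕ} (lam : ℝ)
    (A A' : Matrix (Fin (2 * n)) (Fin d) ℝ)
    (D J J' : Matrix (Fin (2 * n)) (Fin (2 * n)) ℝ)
    (N N' S : Matrix (Fin d) (Fin d) ℝ)
    (B : Matrix (Fin d ⊕ Fin d) (Fin d ⊕ Fin d) ℝ)
    (hDU : IsUnit D) (hJU : IsUnit J) (hJ'U : IsUnit J')
    (hJ'a : J'ᵀ = -J')
    (hGU : IsUnit (Aᵀ * A)) (hG'U : IsUnit (A'ᵀ * A'))
    (hiso' : A'ᵀ * J' * A' = 0)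
    (hconf : Dᵀ * J' * D = lam • J)
    (hDA : D * A = A')
    (hN : N = (Aᵀ * A)⁻¹) (hN' : N' = (A'ᵀ * A')⁻¹)
    (hS : S = (A' * N')ᵀ * D * J⁻¹ * (A * N) - lam • (N'ᵀ * (A'ᵀ * J'⁻¹ * A') * N'))
    (hB : D * fromCols A (J⁻¹ * A * N) = fromCols A' (J'⁻¹ * A' * N') * B) :
    B = fromBlocks 1 S 0 (lam • 1) := by
  have hDtd : IsUnit Dᵀ.det := by
    rw [Matrix.det_transpose]; exact (Matrix.isUnit_iff_isUnit_det D).mp hDU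
  have hJd : IsUnit J.det := (Matrix.isUnit_iff_isUnit_det J).mp hJU
  have hJ'd : IsUnit J'.det := (Matrix.isUnit_iff_isUnit_det J').mp hJ'U
  have hGd : IsUnit (Aᵀ * A).det := (Matrix.isUnit_iff_isUnit_det _).mp hGU
  have hG'd : IsUnit (A'ᵀ * A').det := (Matrix.isUnit_iff_isUnit_det _).mp hG'U
  have hGN : Aᵀ * (A * N) = 1 := by
    rw [← Matrix.mul_assoc, hN]; exact Matrix.mul_nonsing_inv _ hGd
  have hG'N' : A'ᵀ * (A' * N') = 1 := by
    rw [← Matrix.mul_assoc, hN']; exact Matrix.mul_nonsing_inv _ hG'd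
  have hN'G' : N' * (A'ᵀ * A') = 1 := by
    rw [hN']; exact Matrix.nonsing_inv_mul _ hG'd
  have hNt : Nᵀ = N := by
    rw [hN, Matrix.transpose_nonsing_inv, Matrix.transpose_mul, Matrix.transpose_transpose]
  have hN't : N'ᵀ = N' := by
    rw [hN', Matrix.transpose_nonsing_inv, Matrix.transpose_mul, Matrix.transpose_transpose]
  have hJi : J * J⁻¹ = 1 := Matrix.mul_nonsing_inv _ hJd
  have hiJ : J⁻¹ * J = 1 := Matrix.nonsing_inv_mul _ hJd
  have hJ'i : J' * J'⁻¹ = 1 := Matrix.mul_nonsing_inv _ hJ'd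
  have hiJ' : J'⁻¹ * J' = 1 := Matrix.nonsing_inv_mul _ hJ'd
  have hJ'it : J'⁻¹ᵀ = -J'⁻¹ := by
    rw [Matrix.transpose_nonsing_inv, hJ'a]
    refine Matrix.inv_eq_right_inv ?_
    rw [Matrix.neg_mul, Matrix.mul_neg, neg_neg, hJ'i]
  have hJD : J' * D = lam • (Dᵀ⁻¹ * J) := by
    have h1 : Dᵀ * (J' * D) = lam • J := by rw [← Matrix.mul_assoc]; exact hconf
    calc J' * D = Dᵀ⁻¹ * (Dᵀ * (J' * D)) :=
          (aux_cancel (Matrix.nonsing_inv_mul _ hDtd) _).symm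
      _ = Dᵀ⁻¹ * (lam • J) := by rw [h1]
      _ = lam • (Dᵀ⁻¹ * J) := by rw [Matrix.mul_smul]
  have hADt : A'ᵀ * Dᵀ⁻¹ = Aᵀ := by
    have h2 : A'ᵀ = Aᵀ * Dᵀ := by rw [← Matrix.transpose_mul, hDA]
    rw [h2, Matrix.mul_assoc, Matrix.mul_nonsing_inv _ hDtd, Matrix.mul_one]
  have hCt : (J'⁻¹ * A' * N')ᵀ = -(N' * (A'ᵀ * J'⁻¹)) := by
    rw [Matrix.transpose_mul, Matrix.transpose_mul, hN't, hJ'it, Matrix.mul_neg, Matrix.mul_neg]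
  -- block identities
  have hiso2 : A'ᵀ * (J' * A') = 0 := by rw [← Matrix.mul_assoc]; exact hiso'
  have b12 : A'ᵀ * (J' * (D * (J⁻¹ * A * N))) = lam • (1 : Matrix (Fin d) (Fin d) ℝ) := by
    rw [← Matrix.mul_assoc J' D, hJD, Matrix.smul_mul, Matrix.mul_smul]
    congr 1
    rw [Matrix.mul_assoc Dᵀ⁻¹ J, Matrix.mul_assoc J⁻¹ A N, aux_cancel hJi,
      ← Matrix.mul_assoc, hADt, hGN]
  have b21 : (J'⁻¹ * A' * N')ᵀ * (J' * A') = -1 := by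
    rw [hCt, Matrix.neg_mul, Matrix.mul_assoc N', Matrix.mul_assoc A'ᵀ, aux_cancel hiJ', hN'G']
  have b22 : (J'⁻¹ * A' * N')ᵀ * (J' * (D * (J⁻¹ * A * N))) =
      -(N' * (A'ᵀ * (D * (J⁻¹ * (A * N))))) := by
    rw [hCt, Matrix.neg_mul, Matrix.mul_assoc N', Matrix.mul_assoc A'ᵀ, aux_cancel hiJ',
      Matrix.mul_assoc J⁻¹ A N]
  have v12 : A'ᵀ * (J' * (J'⁻¹ * A' * N')) = 1 := by
    rw [Matrix.mul_assoc J'⁻¹ A' N', aux_cancel hJ'i, hG'N']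
  have v22 : (J'⁻¹ * A' * N')ᵀ * (J' * (J'⁻¹ * A' * N')) =
      -(N' * (A'ᵀ * (J'⁻¹ * (A' * N')))) := by
    rw [hCt, Matrix.neg_mul, Matrix.mul_assoc N', Matrix.mul_assoc A'ᵀ, aux_cancel hiJ',
      Matrix.mul_assoc J'⁻¹ A' N']
  have lhs_eq : (fromCols A' (J'⁻¹ * A' * N'))ᵀ *
      (J' * (D * fromCols A (J⁻¹ * A * N))) =
      fromBlocks 0 (lam • 1) (-1) (-(N' * (A'ᵀ * (D * (J⁻¹ * (A * N)))))) := by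
    rw [Matrix.mul_fromCols D, hDA, Matrix.mul_fromCols J', Matrix.transpose_fromCols,
      Matrix.fromRows_mul_fromCols, hiso2, b12, b21, b22]
  have rhs_eq : (fromCols A' (J'⁻¹ * A' * N'))ᵀ *
      (J' * (fromCols A' (J'⁻¹ * A' * N') * B)) =
      fromBlocks 0 1 (-1) (-(N' * (A'ᵀ * (J'⁻¹ * (A' * N'))))) * B := by
    rw [Matrix.transpose_fromCols, ← Matrix.mul_assoc J', Matrix.mul_fromCols J',
      ← Matrix.mul_assoc, Matrix.fromRows_mul_fromCols, hiso2, v12, b21, v22]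
  have h3 : fromBlocks 0 1 (-1) (-(N' * (A'ᵀ * (J'⁻¹ * (A' * N'))))) * B =
      fromBlocks 0 (lam • 1) (-1) (-(N' * (A'ᵀ * (D * (J⁻¹ * (A * N)))))) := by
    rw [← rhs_eq, ← hB, lhs_eq]
  have hE : fromBlocks (-(N' * (A'ᵀ * (J'⁻¹ * (A' * N'))))) (-1) 1 0 *
      fromBlocks 0 1 (-1) (-(N' * (A'ᵀ * (J'⁻¹ * (A' * N'))))) =
      (1 : Matrix (Fin d ⊕ Fin d) (Fin d ⊕ Fin d) ℝ) := by
    rw [Matrix.fromBlocks_multiply]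
    simp
  have hBB : B = fromBlocks (-(N' * (A'ᵀ * (J'⁻¹ * (A' * N'))))) (-1) 1 0 *
      (fromBlocks 0 1 (-1) (-(N' * (A'ᵀ * (J'⁻¹ * (A' * N'))))) * B) := by
    rw [← Matrix.mul_assoc, hE, Matrix.one_mul]
  have hfin : -(lam • (N' * (A'ᵀ * (J'⁻¹ * (A' * N'))))) +
      N' * (A'ᵀ * (D * (J⁻¹ * (A * N)))) = S := by
    rw [hS]
    simp only [Matrix.transpose_mul, hN't, Matrix.mul_assoc, Matrix.neg_mul, Matrix.mul_neg,
      Matrix.one_mul, Matrix.mul_one, neg_neg, Matrix.mul_smul, Matrix.smul_mul,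
      sub_eq_add_neg]
    abel
  rw [hBB, h3, Matrix.fromBlocks_multiply]
  simp only [Matrix.mul_zero, Matrix.zero_mul, Matrix.mul_one, Matrix.one_mul, Matrix.neg_mul,
    Matrix.mul_neg, neg_neg, zero_add, add_zero, Matrix.mul_smul, smul_neg, neg_zero]
  rw [hfin]

/-- Automatic reducibility for a conformally symplectic map with factor `λ`: if
`f ∘ K = K ∘ T_ω` exactly, `DK` has full rank, `DKᵀ (J^c ∘ K) DK = 0` (isotropy), and
`Df ∘ K` satisfies the conformal identity `Dfᵀ (J^c ∘ f) Df = λ J^c`, then, writing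
`Df∘K(θ) M(θ) = M(θ+ω) B(θ)` with `M(θ) = [DK(θ) | (J^c)⁻¹∘K(θ) DK(θ) N(θ)]`, the
matrix `B(θ)` is upper triangular of the form `[[Id_d, S(θ)], [0, λ Id_d]]`. -/
theorem automatic_reducibility
    {d n : ℕ} (ω : Fin d → ℝ) (lam : ℝ) (hlam : lam ≠ 0)
    (f : (Fin (2 * n) → ℝ) → (Fin (2 * n) → ℝ)) (hf : Differentiable ℝ f)
    (K : (Fin d → ℝ) → (Fin (2 * n) → ℝ)) (hK : Differentiable ℝ K)
    (hinv : ∀ θ, f (K θ) = K (θ + ω))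
    (DK : (Fin d → ℝ) → Matrix (Fin (2 * n)) (Fin d) ℝ)
    (hDK : ∀ θ, DK θ = LinearMap.toMatrix' (fderiv ℝ K θ).toLinearMap)
    (Df : (Fin d → ℝ) → Matrix (Fin (2 * n)) (Fin (2 * n)) ℝ)
    (hDf : ∀ θ, Df θ = LinearMap.toMatrix' (fderiv ℝ f (K θ)).toLinearMap)
    (hDfU : ∀ θ, IsUnit (Df θ))
    (Jc : (Fin d → ℝ) → Matrix (Fin (2 * n)) (Fin (2 * n)) ℝ)
    (hJcU : ∀ θ, IsUnit (Jc θ)) (hJca : ∀ θ, (Jc θ)ᵀ = -(Jc θ))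
    (hrank : ∀ θ, (DK θ).rank = d)
    (hiso : ∀ θ, (DK θ)ᵀ * Jc θ * DK θ = 0)
    (hconf : ∀ θ, (Df θ)ᵀ * Jc (θ + ω) * Df θ = lam • Jc θ)
    (N : (Fin d → ℝ) → Matrix (Fin d) (Fin d) ℝ)
    (hN : ∀ θ, N θ = ((DK θ)ᵀ * DK θ)⁻¹)
    (P : (Fin d → ℝ) → Matrix (Fin (2 * n)) (Fin d) ℝ)
    (hP : ∀ θ, P θ = DK θ * N θ)
    (χ : (Fin d → ℝ) → Matrix (Fin d) (Fin d) ℝ)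
    (hχ : ∀ θ, χ θ = (DK θ)ᵀ * (Jc θ)⁻¹ * DK θ)
    (S : (Fin d → ℝ) → Matrix (Fin d) (Fin d) ℝ)
    (hS : ∀ θ, S θ = (P (θ + ω))ᵀ * Df θ * (Jc θ)⁻¹ * P θ -
      lam • ((N (θ + ω))ᵀ * χ (θ + ω) * N (θ + ω)))
    (M : (Fin d → ℝ) → Matrix (Fin (2 * n)) (Fin d ⊕ Fin d) ℝ)
    (hM : ∀ θ, M θ = Matrix.fromCols (DK θ) ((Jc θ)⁻¹ * DK θ * N θ))
    (B : (Fin d → ℝ) → Matrix (Fin d ⊕ Fin d) (Fin d ⊕ Fin d) ℝ)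
    (hB : ∀ θ, Df θ * M θ = M (θ + ω) * B θ) :
    ∀ θ, B θ = Matrix.fromBlocks (1 : Matrix (Fin d) (Fin d) ℝ) (S θ)
      (0 : Matrix (Fin d) (Fin d) ℝ) (lam • (1 : Matrix (Fin d) (Fin d) ℝ)) := by
  intro θ
  have hDA : Df θ * DK θ = DK (θ + ω) := by
    have hc : fderiv ℝ (f ∘ K) θ = (fderiv ℝ f (K θ)).comp (fderiv ℝ K θ) :=
      fderiv_comp θ (hf (K θ)) (hK θ)
    have hc2 : (f ∘ K) = fun x => K (x + ω) := funext hinv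
    have hg : fderiv ℝ (fun x : Fin d → ℝ => x + ω) θ =
        ContinuousLinearMap.id ℝ (Fin d → ℝ) := by
      rw [fderiv_add_const]; exact fderiv_id
    have hc3 : fderiv ℝ (fun x => K (x + ω)) θ = fderiv ℝ K (θ + ω) := by
      have heq : (fun x => K (x + ω)) = K ∘ (fun x : Fin d → ℝ => x + ω) := rfl
      rw [heq, fderiv_comp θ (hK _) ((differentiable_fun_id.add_const ω) θ), hg,
        ContinuousLinearMap.comp_id]
    rw [hDf θ, hDK θ, hDK (θ + ω), ← LinearMap.toMatrix'_comp, ← ContinuousLinearMap.toLinearMap_comp,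
      ← hc, hc2, hc3]
  refine aux_key lam (DK θ) (DK (θ + ω)) (Df θ) (Jc θ) (Jc (θ + ω)) (N θ) (N (θ + ω)) (S θ)
    (B θ) (hDfU θ) (hJcU θ) (hJcU (θ + ω)) (hJca (θ + ω)) (aux_unit _ (hrank θ))
    (aux_unit _ (hrank (θ + ω))) (hiso (θ + ω)) (hconf θ) hDA (hN θ) (hN (θ + ω)) ?_ ?_
  · rw [hS θ, hP θ, hP (θ + ω), hχ (θ + ω)]
  · have h := hB θ
    rw [hM θ, hM (θ + ω)] at h
    exact h
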